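/- Fix unit vectors x̂_1,…,x̂_n ∈ S^{d−1} and weights ω_i > 0 with ∑_i ω_i = 1, and let H Ad(y) denote the Hessian at y of Ad(y) = ∑_i ω_i ‖x̂_i − y‖. Then for every nonzero s ∈ ℝ^d with ‖s‖ < 1 (and s not equal to any x̂_i), ⟨H Ad(s)·s, s⟩/⟨s,s⟩ − ⟨H Ad(0)·s, s⟩/⟨s,s⟩ ≥ −‖s‖ (6 + ‖s‖ + ‖s‖²)/(1 − ‖s‖)³. In particular, if ‖s‖ < 1/50, the right-hand side is at least −7‖s‖. -/

import Mathlib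

private lemma key13 (r a q : ℝ) (hr0 : 0 < r) (hr1 : r < 1) (ha1 : 1 - r ≤ a)
    (ha2 : a ≤ 1 + r) (hq : |q| ≤ r) :
    r^2/a - (r^2 - q)^2/a^3 - r^2 + q^2 ≥ -(r*(6+r+r^2)/(1-r)^3) * r^2 := by
  have h1r : 0 < 1 - r := by linarith
  have ha0 : 0 < a := by linarith
  have h13 : 0 < (1-r)^3 := by positivity
  obtain ⟨hqL, hqU⟩ := abs_le.mp hq
  have hq2 : q^2 ≤ r^2 := sq_le_sq' (by linarith) hqU
  -- step A : r^2/a - r^2 ≥ -r^3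
  have hA : r^2/a ≥ r^2 - r^3 := by
    have h1 : r^2/(1+r) ≤ r^2/a := by gcongr
    have h2 : r^2 - r^3 ≤ r^2/(1+r) := by
      rw [le_div_iff₀ (by linarith)]; nlinarith
    linarith
  -- step B
  have ha3 : (1-r)^3 ≤ a^3 := pow_le_pow_left₀ h1r.le ha1 3
  have hB1 : (r^2 - q)^2/a^3 ≤ (r^2 - q)^2/(1-r)^3 := by gcongr
  have hnum : -(r^3*(5-2*r+r^2)) ≤ q^2*(1-r)^3 - (r^2-q)^2 := by
    nlinarith [mul_nonneg (mul_nonneg hr0.le (sub_nonneg.2 hq2))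
        (show (0:ℝ) ≤ 3 - 3*r + r^2 by nlinarith),
      mul_nonneg (sq_nonneg r) (show (0:ℝ) ≤ q + r by linarith)]
  have hB : -(r^3*(5-2*r+r^2))/(1-r)^3 ≤ q^2 - (r^2 - q)^2/(1-r)^3 := by
    have e1 : q^2 - (r^2 - q)^2/(1-r)^3 = (q^2*(1-r)^3 - (r^2-q)^2)/(1-r)^3 := by
      field_simp
    rw [e1, div_le_div_iff_of_pos_right h13]
    exact hnum
  -- step C
  have hC : r^3*(1+3*r)/(1-r)^3 ≥ r^3 := by
    rw [ge_iff_le, le_div_iff₀ h13]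
    nlinarith [mul_nonneg (pow_nonneg hr0.le 4) (show (0:ℝ) ≤ 6 - 3*r + r^2 by nlinarith)]
  have e2 : -(r*(6+r+r^2)/(1-r)^3) * r^2
      = -(r^3*(5-2*r+r^2))/(1-r)^3 - r^3*(1+3*r)/(1-r)^3 := by
    field_simp; ring
  rw [e2]
  linarith

theorem stmt13 (d n : ℕ) (x : Fin n → EuclideanSpace ℝ (Fin d)) (hx : ∀ i, ‖x i‖ = 1)
    (ω : Fin n → ℝ) (hω : ∀ i, 0 < ω i) (hsum : ∑ i, ω i = 1)
    (Q : EuclideanSpace ℝ (Fin d) → EuclideanSpace ℝ (Fin d) → ℝ)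
    (hQ : ∀ y s, Q y s = (∑ i, ω i / ‖x i - y‖) * ‖s‖ ^ 2
      - ∑ i, (ω i / ‖x i - y‖ ^ 3) * (inner ℝ (y - x i) s : ℝ) ^ 2)
    (s : EuclideanSpace ℝ (Fin d)) (hs0 : s ≠ 0) (hs1 : ‖s‖ < 1) (hsx : ∀ i, s ≠ x i) :
    Q s s / ‖s‖ ^ 2 - Q 0 s / ‖s‖ ^ 2 ≥
      -‖s‖ * (6 + ‖s‖ + ‖s‖ ^ 2) / (1 - ‖s‖) ^ 3 ∧
    (‖s‖ < 1 / 50 → -‖s‖ * (6 + ‖s‖ + ‖s‖ ^ 2) / (1 - ‖s‖) ^ 3 ≥ -7 * ‖s‖) := by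
  have hr0 : 0 < ‖s‖ := norm_pos_iff.mpr hs0
  have h1r : 0 < 1 - ‖s‖ := by linarith
  have h13 : (0:ℝ) < (1 - ‖s‖)^3 := by positivity
  constructor
  · -- main inequality
    set r : ℝ := ‖s‖ with hr
    have hdiff : Q s s - Q 0 s
        = ∑ i, ω i * (r^2/‖x i - s‖ - (r^2 - (inner ℝ (x i) s : ℝ))^2/‖x i - s‖^3
            - r^2 + (inner ℝ (x i) s : ℝ)^2) := by
      rw [hQ, hQ]
      have e0 : ∀ i, ‖x i - (0:EuclideanSpace ℝ (Fin d))‖ = 1 := by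
        intro i; rw [sub_zero, hx]
      have einner : ∀ i, (inner ℝ (s - x i) s : ℝ) = r^2 - (inner ℝ (x i) s : ℝ) := by
        intro i
        rw [inner_sub_left, real_inner_self_eq_norm_sq]
      have einner0 : ∀ i, (inner ℝ ((0:EuclideanSpace ℝ (Fin d)) - x i) s : ℝ)
          = -(inner ℝ (x i) s : ℝ) := by
        intro i; rw [zero_sub, inner_neg_left]
      simp only [e0, einner, einner0, div_one, one_pow, neg_sq]
      rw [hsum, Finset.sum_mul, ← Finset.sum_sub_distrib]
      rw [show (1:ℝ) * ‖s‖^2 = ∑ i, ω i * ‖s‖^2 from by rw [← Finset.sum_mul, hsum]]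
      rw [← Finset.sum_sub_distrib, ← Finset.sum_sub_distrib]
      apply Finset.sum_congr rfl
      intro i _
      ring
    have hterm : ∀ i ∈ Finset.univ (α := Fin n),
        ω i * (-(r*(6+r+r^2)/(1-r)^3) * r^2)
          ≤ ω i * (r^2/‖x i - s‖ - (r^2 - (inner ℝ (x i) s : ℝ))^2/‖x i - s‖^3
            - r^2 + (inner ℝ (x i) s : ℝ)^2) := by
      intro i _
      apply mul_le_mul_of_nonneg_left _ (hω i).le
      apply key13 r (‖x i - s‖) (inner ℝ (x i) s : ℝ) hr0 hs1
      · calc 1 - r = ‖x i‖ - ‖s‖ := by rw [hx]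
          _ ≤ ‖x i - s‖ := norm_sub_norm_le _ _
      · calc ‖x i - s‖ ≤ ‖x i‖ + ‖s‖ := norm_sub_le _ _
          _ = 1 + r := by rw [hx]
      · calc |(inner ℝ (x i) s : ℝ)| ≤ ‖x i‖ * ‖s‖ := abs_real_inner_le_norm _ _
          _ = r := by rw [hx, one_mul]
    have hsumge : -(r*(6+r+r^2)/(1-r)^3) * r^2 ≤ Q s s - Q 0 s := by
      rw [hdiff]
      calc -(r*(6+r+r^2)/(1-r)^3) * r^2
          = ∑ i, ω i * (-(r*(6+r+r^2)/(1-r)^3) * r^2) := by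
            rw [← Finset.sum_mul, hsum, one_mul]
        _ ≤ _ := Finset.sum_le_sum hterm
    have hr2 : (0:ℝ) < r^2 := by positivity
    have : (-(r*(6+r+r^2)/(1-r)^3) * r^2) / r^2 ≤ (Q s s - Q 0 s) / r^2 := by
      gcongr
    rw [mul_div_assoc, div_self (ne_of_gt hr2), mul_one, sub_div] at this
    rw [ge_iff_le, show -r * (6+r+r^2)/(1-r)^3 = -(r*(6+r+r^2)/(1-r)^3) by ring]
    exact this
  · intro h50
    have key : ‖s‖*(6+‖s‖+‖s‖^2)/(1-‖s‖)^3 ≤ 7*‖s‖ := by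
      rw [div_le_iff₀ h13]
      nlinarith [sq_nonneg ‖s‖, pow_pos hr0 3]
    rw [ge_iff_le, show -‖s‖ * (6+‖s‖+‖s‖^2)/(1-‖s‖)^3
        = -(‖s‖*(6+‖s‖+‖s‖^2)/(1-‖s‖)^3) by ring]
    linarith
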